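/- arXiv:0801.0874 — 2 statements merged into one kernel-verified Lean document; each statement's English description precedes it below -/
import Mathlib

section
/- For every α = (α_1,…,α_n) ∈ {0,…,r−1}^n and every w ∈ S_n, the Π-length of t^α w in G_{r,n} satisfies ℓ(t^α w) = |α| + ℓ(w), where |α| = α_1 + ⋯ + α_n. -/
open Equiv SemidirectProduct

namespace CycSol

/-- The action of the symmetric group on the "torus" `(ℤ/r)^n` by permuting coordinates. -/
def act (r n : ℕ) : Equiv.Perm (Fin n) →* MulAut (Multiplicative (Fin n → ZMod r)) where
  toFun w :=
    { toFun := fun f => Multiplicative.ofAdd fun i => Multiplicative.toAdd f (w⁻¹ i)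
      invFun := fun f => Multiplicative.ofAdd fun i => Multiplicative.toAdd f (w i)
      left_inv := fun f => by
        show Multiplicative.ofAdd (fun i => Multiplicative.toAdd f (w⁻¹ (w i))) = f
        simp
      right_inv := fun f => by
        show Multiplicative.ofAdd (fun i => Multiplicative.toAdd f (w (w⁻¹ i))) = f
        simp
      map_mul' := fun f g => rfl }
  map_one' := by
    refine MulEquiv.ext fun f => ?_
    show Multiplicative.ofAdd (fun i => Multiplicative.toAdd f ((1 : Equiv.Perm (Fin n))⁻¹ i)) = f
    simp
  map_mul' := fun u v => by
    refine MulEquiv.ext fun f => ?_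
    show Multiplicative.ofAdd (fun i => Multiplicative.toAdd f ((u * v)⁻¹ i)) = _
    simp [Equiv.Perm.mul_apply, mul_inv_rev]

/-- The wreath product `(ℤ/r) ≀ S_n`, i.e. the complex reflection group `G(r,1,n)`. -/
abbrev Grn (r n : ℕ) :=
  SemidirectProduct (Multiplicative (Fin n → ZMod r)) (Equiv.Perm (Fin n)) (act r n)

/-- The generator `t_i`. -/
def tGen (r n : ℕ) (i : Fin n) : Grn r n :=
  inl (Multiplicative.ofAdd (Pi.single i 1))

/-- `sGen i j` is the transposition `(i,j)`, viewed inside `G(r,1,n)`. -/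
def sGen (r n : ℕ) (i j : Fin n) : Grn r n := inr (Equiv.swap i j)

/-- `t^α` for a vector `α ∈ {0,…,r-1}^n`. -/
def tPow (r n : ℕ) (α : Fin n → Fin r) : Grn r n :=
  inl (Multiplicative.ofAdd fun i => ((α i : ℕ) : ZMod r))

/-- The generating set `Π = {t_1,…,t_n, s_1,…,s_{n-1}}`. -/
def PiSet (r n : ℕ) : Set (Grn r n) :=
  {g | (∃ i : Fin n, g = tGen r n i) ∨
       (∃ i j : Fin n, (j : ℕ) = (i : ℕ) + 1 ∧ g = sGen r n i j)}

/-- The `Π`-length of an element of `G(r,1,n)`. -/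
noncomputable def len (r n : ℕ) (g : Grn r n) : ℕ :=
  sInf {k | ∃ l : List (Grn r n), l.length = k ∧ (∀ x ∈ l, x ∈ PiSet r n) ∧ l.prod = g}

/-- A signed composition of `n`: a list of nonzero integers whose absolute values sum to `n`. -/
def IsSignedComp (n : ℕ) (μ : List ℤ) : Prop :=
  (∀ x ∈ μ, x ≠ 0) ∧ (μ.map Int.natAbs).sum = n

/-- The type of signed compositions of `n`. -/
abbrev SComp (n : ℕ) := {l : List ℤ // IsSignedComp n l}

/-- `μ̄_i = |μ_1| + ⋯ + |μ_i|`. -/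
def absPrefix (μ : List ℤ) (i : ℕ) : ℕ := ((μ.take i).map Int.natAbs).sum

/-- The subset `Π_μ ⊆ Π` attached to a signed composition `μ` (here `t_j, s_j` are indexed by
`j : Fin n`, i.e. `0`-based). -/
def PiMu (r n : ℕ) (μ : List ℤ) : Set (Grn r n) :=
  {g | (∃ j : Fin n, (∃ i, i < μ.length ∧ 0 < μ.getD i 0 ∧
          absPrefix μ i ≤ (j : ℕ) ∧ (j : ℕ) < absPrefix μ (i + 1)) ∧ g = tGen r n j) ∨
       (∃ j k : Fin n, (k : ℕ) = (j : ℕ) + 1 ∧ (∃ i, i < μ.length ∧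
          absPrefix μ i ≤ (j : ℕ) ∧ (k : ℕ) < absPrefix μ (i + 1)) ∧ g = sGen r n j k)}

/-- The reflection subgroup `G_μ = ⟨Π_μ⟩`. -/
def Gmu (r n : ℕ) (μ : List ℤ) : Subgroup (Grn r n) := Subgroup.closure (PiMu r n μ)

/-- The subgroup `T = (ℤ/r)^n` of `G(r,1,n)`. -/
def Tsub (r n : ℕ) : Subgroup (Grn r n) :=
  (inl : Multiplicative (Fin n → ZMod r) →* Grn r n).range

/-- The subgroup `S_n` of `G(r,1,n)`. -/
def Ssub (r n : ℕ) : Subgroup (Grn r n) :=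
  (inr : Equiv.Perm (Fin n) →* Grn r n).range

/-- `T_{-μ}`: the subgroup of `T` generated by those `t_i` not lying in `G_μ`. -/
def Tneg (r n : ℕ) (μ : List ℤ) : Subgroup (Grn r n) :=
  Subgroup.closure {g | ∃ i : Fin n, tGen r n i ∉ Gmu r n μ ∧ g = tGen r n i}

/-- The Young subgroup `S_{μ^+} = G_μ ∩ S_n`, as a subgroup of `S_n`. -/
def youngS (r n : ℕ) (μ : List ℤ) : Subgroup (Equiv.Perm (Fin n)) :=
  (Gmu r n μ).comap (inr : Equiv.Perm (Fin n) →* Grn r n)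

/-- `𝒟_{μ^+}`: the permutations of minimal (Coxeter = `Π`-) length in their right coset
`S_{μ^+} w`. -/
noncomputable def Dset (r n : ℕ) (μ : List ℤ) : Set (Equiv.Perm (Fin n)) :=
  {d | ∀ w : Equiv.Perm (Fin n), w * d⁻¹ ∈ youngS r n μ →
        len r n (inr d) ≤ len r n (inr w)}

/-- `𝒟_{μ^+ν^+} = 𝒟_{μ^+} ∩ 𝒟_{ν^+}^{-1}`. -/
noncomputable def DD (r n : ℕ) (μ ν : List ℤ) : Set (Equiv.Perm (Fin n)) :=
  Dset r n μ ∩ {d | d⁻¹ ∈ Dset r n ν}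

/-- `𝓔_μ`: the elements of minimal `Π`-length in their right coset `G_μ e`. -/
noncomputable def Ecal (r n : ℕ) (μ : List ℤ) : Set (Grn r n) :=
  {e | ∀ g : Grn r n, g * e⁻¹ ∈ Gmu r n μ → len r n e ≤ len r n g}

/-- `E_μ = Σ_{e ∈ 𝓔_μ} e` in the group algebra `R G(r,1,n)`. -/
noncomputable def Emu (R : Type) [CommRing R] (r n : ℕ) (μ : List ℤ) :
    MonoidAlgebra R (Grn r n) :=
  ∑ᶠ e ∈ Ecal r n μ, MonoidAlgebra.of R (Grn r n) e

/-- The generating set `{E_μ : μ a signed composition of n}` of the cyclotomic Solomon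
algebra. -/
def SolSet (R : Type) [CommRing R] (r n : ℕ) : Set (MonoidAlgebra R (Grn r n)) :=
  {x | ∃ μ : List ℤ, IsSignedComp n μ ∧ x = Emu R r n μ}

/-- The cyclotomic Solomon algebra `Sol(G(r,1,n))`. -/
noncomputable def Sol (R : Type) [CommRing R] (r n : ℕ) :
    Subalgebra R (MonoidAlgebra R (Grn r n)) :=
  Algebra.adjoin R (SolSet R r n)


section Aux

variable {r n : ℕ}

/-- The word set defining `len`. -/
def WordSet (r n : ℕ) (g : Grn r n) : Set ℕ :=
  {k | ∃ l : List (Grn r n), l.length = k ∧ (∀ x ∈ l, x ∈ PiSet r n) ∧ l.prod = g}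

lemma len_eq_sInf (g : Grn r n) : len r n g = sInf (WordSet r n g) := rfl

/-- weight: sum of torus valuations. -/
noncomputable def psi (r n : ℕ) (g : Grn r n) : ℕ :=
  ∑ i, (Multiplicative.toAdd g.left i).val

lemma toAdd_left_mul (a b : Grn r n) :
    Multiplicative.toAdd (a * b).left =
      fun i => Multiplicative.toAdd a.left i + Multiplicative.toAdd b.left (a.right⁻¹ i) := rfl

lemma psi_mul [NeZero r] (a b : Grn r n) : psi r n (a * b) ≤ psi r n a + psi r n b := by
  unfold psi
  rw [toAdd_left_mul]
  calc ∑ i, (Multiplicative.toAdd a.left i + Multiplicative.toAdd b.left (a.right⁻¹ i)).val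
      ≤ ∑ i, ((Multiplicative.toAdd a.left i).val +
          (Multiplicative.toAdd b.left (a.right⁻¹ i)).val) :=
        Finset.sum_le_sum fun i _ => ZMod.val_add_le _ _
    _ = _ := by
        rw [Finset.sum_add_distrib]
        congr 1
        exact Fintype.sum_equiv a.right⁻¹ _ _ fun i => rfl

lemma psi_inl (f : Fin n → ZMod r) :
    psi r n (inl (Multiplicative.ofAdd f)) = ∑ i, (f i).val := rfl

lemma psi_inr (w : Equiv.Perm (Fin n)) : psi r n (inr w) = 0 := by
  unfold psi
  have h : (inr w : Grn r n).left = 1 := left_inr w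
  rw [h]
  simp

lemma psi_one : psi r n (1 : Grn r n) = 0 := by
  unfold psi
  have h : (1 : Grn r n).left = 1 := rfl
  rw [h]
  simp

lemma psi_tGen (hr : 2 ≤ r) (i : Fin n) : psi r n (tGen r n i) = 1 := by
  haveI : NeZero r := ⟨by omega⟩
  unfold tGen
  rw [psi_inl]
  rw [Finset.sum_eq_single i]
  · simp [ZMod.val_one_eq_one_mod, Nat.mod_eq_of_lt hr]
  · intro j _ hj; simp [Pi.single_apply, hj]
  · simp

lemma prod_map_inr (l : List (Equiv.Perm (Fin n))) :
    (l.map (inr : Equiv.Perm (Fin n) →* Grn r n)).prod = inr l.prod :=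
  (map_list_prod _ _).symm

lemma exists_word_inr_aux (r m : ℕ) (w : Equiv.Perm (Fin (m + 1))) :
    ∃ l : List (Grn r (m + 1)), (∀ x ∈ l, x ∈ PiSet r (m + 1)) ∧ l.prod = inr w := by
  have hw : w ∈ Submonoid.closure (Set.range fun i : Fin m ↦
      Equiv.swap i.castSucc i.succ) := by
    rw [Equiv.Perm.mclosure_swap_castSucc_succ m]
    trivial
  obtain ⟨l, hl, hprod⟩ := Submonoid.exists_list_of_mem_closure hw
  refine ⟨l.map inr, ?_, by rw [prod_map_inr, hprod]⟩
  intro x hx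
  simp only [List.mem_map] at hx
  obtain ⟨y, hy, rfl⟩ := hx
  obtain ⟨i, rfl⟩ := hl y hy
  exact Or.inr ⟨i.castSucc, i.succ, by simp, rfl⟩

/-- Every permutation has a Π-word. -/
lemma exists_word_inr (w : Equiv.Perm (Fin n)) :
    ∃ l : List (Grn r n), (∀ x ∈ l, x ∈ PiSet r n) ∧ l.prod = inr w := by
  cases n with
  | zero =>
      refine ⟨[], by simp, ?_⟩
      rw [Subsingleton.elim w 1]
      simp
  | succ m => exact exists_word_inr_aux r m w

lemma wordSet_inr_nonempty (w : Equiv.Perm (Fin n)) : (WordSet r n (inr w)).Nonempty := by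
  obtain ⟨l, h1, h2⟩ := exists_word_inr (r := r) w
  exact ⟨l.length, l, rfl, h1, h2⟩

lemma len_inr_le_of_word (w : Equiv.Perm (Fin n)) {l : List (Grn r n)}
    (h1 : ∀ x ∈ l, x ∈ PiSet r n) (h2 : l.prod = inr w) :
    len r n (inr w) ≤ l.length :=
  Nat.sInf_le ⟨l, rfl, h1, h2⟩

lemma len_inr_mul_swap_le (i j : Fin n) (hij : (j : ℕ) = (i : ℕ) + 1)
    (u : Equiv.Perm (Fin n)) :
    len r n (inr (Equiv.swap i j * u)) ≤ 1 + len r n (inr u) := by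
  have hmem := Nat.sInf_mem (wordSet_inr_nonempty (r := r) u)
  obtain ⟨l, hlen, hmemP, hprod⟩ := hmem
  refine le_trans (len_inr_le_of_word _ (l := sGen r n i j :: l) ?_ ?_) ?_
  · intro x hx
    rcases List.mem_cons.mp hx with rfl | hx
    · exact Or.inr ⟨i, j, hij, rfl⟩
    · exact hmemP _ hx
  · rw [List.prod_cons, hprod]
    exact (map_mul (inr : Equiv.Perm (Fin n) →* Grn r n) _ _).symm
  · rw [List.length_cons, hlen]
    rw [len_eq_sInf]
    omega

lemma len_inr_one : len r n (inr (1 : Equiv.Perm (Fin n))) = 0 := by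
  have : (0 : ℕ) ∈ WordSet r n (inr 1) := ⟨[], rfl, by simp, by simp⟩
  exact Nat.le_zero.mp (Nat.sInf_le this)

/-- Lower-bound lemma: any Π-word for `g` has length at least `psi g + len(inr (π g))`. -/
lemma lower_bound (hr : 2 ≤ r) (l : List (Grn r n)) (hl : ∀ x ∈ l, x ∈ PiSet r n) :
    psi r n l.prod + len r n (inr (rightHom l.prod)) ≤ l.length := by
  haveI : NeZero r := ⟨by omega⟩
  induction l with
  | nil =>
      simp only [List.prod_nil, List.length_nil]
      rw [map_one, psi_one, len_inr_one]
  | cons x t ih =>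
      have ht : ∀ y ∈ t, y ∈ PiSet r n := fun y hy => hl y (List.mem_cons_of_mem _ hy)
      have hx := hl x (List.mem_cons_self (a := x) (l := t))
      specialize ih ht
      rw [List.prod_cons, List.length_cons]
      rcases hx with ⟨i, rfl⟩ | ⟨i, j, hij, rfl⟩
      · -- t-generator
        have h1 : rightHom (tGen r n i * t.prod) = rightHom t.prod := by
          rw [map_mul]
          have : rightHom (tGen r n i) = 1 := rightHom_inl _
          rw [this, one_mul]
        have h2 : psi r n (tGen r n i * t.prod) ≤ 1 + psi r n t.prod := by
          have h := psi_mul (tGen r n i) t.prod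
          rw [psi_tGen hr i] at h
          exact h
        rw [h1]
        omega
      · -- s-generator
        have h1 : rightHom (sGen r n i j * t.prod) = Equiv.swap i j * rightHom t.prod := by
          rw [map_mul]
          have : rightHom (sGen r n i j) = Equiv.swap i j := rightHom_inr _
          rw [this]
        have h2 : psi r n (sGen r n i j * t.prod) ≤ psi r n t.prod := by
          have h := psi_mul (sGen r n i j) t.prod
          rw [show sGen r n i j = inr (Equiv.swap i j) from rfl, psi_inr] at h
          simpa [sGen] using h
        have h3 := len_inr_mul_swap_le (r := r) i j hij (rightHom t.prod)
        rw [h1]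
        omega

/-- Upper bound word for the torus part. -/
lemma exists_word_torus_aux (hr : 2 ≤ r) (N : ℕ) :
    ∀ f : Fin n → ℕ, ∑ i, f i = N →
    ∃ l : List (Grn r n), l.length = N ∧ (∀ x ∈ l, x ∈ PiSet r n) ∧
      l.prod = inl (Multiplicative.ofAdd fun i => ((f i : ℕ) : ZMod r)) := by
  induction N using Nat.strong_induction_on with
  | _ N IH =>
  intro f hN
  rcases Nat.eq_zero_or_pos N with h0 | hpos
  · subst h0
    have hf : ∀ i, f i = 0 := fun i =>
      Finset.sum_eq_zero_iff.mp hN i (Finset.mem_univ i)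
    refine ⟨[], rfl, by simp, ?_⟩
    simp only [List.prod_nil]
    have : (fun i => ((f i : ℕ) : ZMod r)) = fun _ => 0 := by
      funext i; rw [hf i]; simp
    rw [this]
    rfl
  · have : ∃ j, 0 < f j := by
      by_contra h
      push_neg at h
      have : ∑ i, f i = 0 := Finset.sum_eq_zero fun i _ => Nat.le_zero.mp (h i)
      omega
    obtain ⟨j, hj⟩ := this
    set g : Fin n → ℕ := Function.update f j (f j - 1) with hg
    have hsum : ∑ i, g i = N - 1 := by
      have h1 : ∑ i, Function.update f j (f j) i = f j + ∑ i ∈ Finset.univ \ {j}, f i :=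
        Finset.sum_update_of_mem (Finset.mem_univ j) f (f j)
      rw [Function.update_eq_self] at h1
      rw [hg, Finset.sum_update_of_mem (Finset.mem_univ j)]
      omega
    obtain ⟨l, hlen, hmem, hprod⟩ := IH (N - 1) (by omega) g hsum
    refine ⟨tGen r n j :: l, ?_, ?_, ?_⟩
    · rw [List.length_cons, hlen]; omega
    · intro x hx
      rcases List.mem_cons.mp hx with rfl | hx
      · exact Or.inl ⟨j, rfl⟩
      · exact hmem _ hx
    · rw [List.prod_cons, hprod, tGen, ← map_mul]
      congr 1
      rw [← ofAdd_add]
      congr 1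
      funext i
      rw [Pi.add_apply]
      rcases eq_or_ne i j with rfl | hij
      · rw [Pi.single_eq_same, hg]
        simp only [Function.update_self]
        have : (f i : ZMod r) = ((f i - 1 : ℕ) : ZMod r) + 1 := by
          conv_lhs => rw [show f i = (f i - 1) + 1 by omega]
          push_cast
          ring
        rw [this]; ring
      · rw [Pi.single_eq_of_ne hij, hg]
        simp only [Function.update_of_ne hij]
        ring

lemma exists_word_torus (hr : 2 ≤ r) (f : Fin n → ℕ) :
    ∃ l : List (Grn r n), l.length = ∑ i, f i ∧ (∀ x ∈ l, x ∈ PiSet r n) ∧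
      l.prod = inl (Multiplicative.ofAdd fun i => ((f i : ℕ) : ZMod r)) :=
  exists_word_torus_aux hr (∑ i, f i) f rfl

end Aux
theorem stmt0 (r n : ℕ) (hr : 2 ≤ r) (hn : 1 ≤ n)
    (α : Fin n → Fin r) (w : Equiv.Perm (Fin n)) :
    len r n (tPow r n α * inr w) = (∑ i, (α i : ℕ)) + len r n (inr w) := by
  haveI : NeZero r := ⟨by omega⟩
  -- the element in question
  set g := tPow r n α * inr w with hg
  have hpsig : psi r n g = ∑ i, (α i : ℕ) := by
    have hleft : g.left = Multiplicative.ofAdd fun i => ((α i : ℕ) : ZMod r) := by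
      rw [hg, mul_left, tPow, left_inl, left_inr, right_inl]
      simp
    unfold psi
    rw [hleft]
    exact Finset.sum_congr rfl fun i _ => ZMod.val_cast_of_lt (α i).isLt
  have hright : rightHom g = w := by
    rw [hg, map_mul, tPow, rightHom_inl, rightHom_inr, one_mul]
  -- upper bound
  obtain ⟨lt, hlt_len, hlt_mem, hlt_prod⟩ :=
    exists_word_torus (n := n) hr (fun i => (α i : ℕ))
  obtain ⟨lw, hlw_len, hlw_mem, hlw_prod⟩ :=
    Nat.sInf_mem (wordSet_inr_nonempty (r := r) w)
  have hupper : len r n g ≤ (∑ i, (α i : ℕ)) + len r n (inr w) := by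
    refine Nat.sInf_le ⟨lt ++ lw, ?_, ?_, ?_⟩
    · rw [List.length_append, hlt_len, hlw_len]; rfl
    · intro x hx
      rcases List.mem_append.mp hx with h | h
      · exact hlt_mem x h
      · exact hlw_mem x h
    · rw [List.prod_append, hlt_prod, hlw_prod, hg, tPow]
  -- lower bound
  have hne : (WordSet r n g).Nonempty := by
    refine ⟨(lt ++ lw).length, lt ++ lw, rfl, ?_, ?_⟩
    · intro x hx
      rcases List.mem_append.mp hx with h | h
      · exact hlt_mem x h
      · exact hlw_mem x h
    · rw [List.prod_append, hlt_prod, hlw_prod, hg, tPow]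
  obtain ⟨l, hlen, hmem, hprod⟩ := Nat.sInf_mem hne
  have hlow := lower_bound hr l hmem
  rw [hprod, hpsig, hright] at hlow
  have : len r n g = l.length := hlen.symm
  omega
end CycSol
end

section
/- For every subset J ⊆ Π there is a unique signed composition μ of n such that ⟨J⟩ = G_μ. Consequently, G_{r,n} has exactly 2·3^{n−1} distinct reflection subgroups. -/
open Equiv SemidirectProduct

namespace CycSol

section Lists

/-! ### Combinatorics of signed compositions -/

/-- `m` lies in a positive block of `μ` (with offset `o`). -/
def PosAt (mu : List ℤ) (o m : ℕ) : Prop :=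
  ∃ i, i < mu.length ∧ 0 < mu.getD i 0 ∧ o + absPrefix mu i ≤ m ∧ m < o + absPrefix mu (i + 1)

/-- `m` is a block boundary of `μ` (with offset `o`). -/
def Bdry (mu : List ℤ) (o m : ℕ) : Prop := ∃ i, o + absPrefix mu i = m

/-- `m` and `m+1` lie in the same block of `μ` (with offset `o`). -/
def InBlk (mu : List ℤ) (o m : ℕ) : Prop :=
  ∃ i, i < mu.length ∧ o + absPrefix mu i ≤ m ∧ m + 1 < o + absPrefix mu (i + 1)

lemma absPrefix_zero (mu : List ℤ) : absPrefix mu 0 = 0 := rfl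

lemma absPrefix_nil (i : ℕ) : absPrefix [] i = 0 := by simp [absPrefix]

lemma absPrefix_cons_succ (x : ℤ) (l : List ℤ) (i : ℕ) :
    absPrefix (x :: l) (i + 1) = x.natAbs + absPrefix l i := by
  simp [absPrefix]

lemma absPrefix_of_le {mu : List ℤ} {i : ℕ} (h : mu.length ≤ i) :
    absPrefix mu i = (mu.map Int.natAbs).sum := by
  rw [absPrefix, List.take_of_length_le h]

lemma absPrefix_mono (mu : List ℤ) {i j : ℕ} (h : i ≤ j) : absPrefix mu i ≤ absPrefix mu j := by
  induction mu generalizing i j with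
  | nil => simp [absPrefix_nil]
  | cons x l ih =>
    cases i with
    | zero => exact Nat.zero_le _
    | succ i =>
      cases j with
      | zero => omega
      | succ j =>
        rw [absPrefix_cons_succ, absPrefix_cons_succ]
        exact Nat.add_le_add_left (ih (by omega)) _

lemma absPrefix_le_sum (mu : List ℤ) (i : ℕ) : absPrefix mu i ≤ (mu.map Int.natAbs).sum := by
  rw [← absPrefix_of_le (le_refl mu.length)]
  rcases le_total i mu.length with h | h
  · exact absPrefix_mono mu h
  · rw [absPrefix_of_le h, absPrefix_of_le (le_refl mu.length)]

lemma absPrefix_succ_of_lt {mu : List ℤ} {i : ℕ} (h : i < mu.length) :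
    absPrefix mu (i + 1) = absPrefix mu i + (mu.getD i 0).natAbs := by
  induction mu generalizing i with
  | nil => simp at h
  | cons x l ih =>
    cases i with
    | zero => simp [absPrefix_cons_succ, absPrefix_zero]
    | succ i =>
      rw [absPrefix_cons_succ, absPrefix_cons_succ, ih (by simpa using h)]
      simp [Nat.add_assoc]

lemma getD_ne_zero {mu : List ℤ} (hne : ∀ x ∈ mu, x ≠ 0) {i : ℕ} (h : i < mu.length) :
    mu.getD i 0 ≠ 0 := by
  rw [List.getD_eq_getElem mu 0 h]
  exact hne _ (mu.getElem_mem h)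

lemma absPrefix_lt_succ {mu : List ℤ} (hne : ∀ x ∈ mu, x ≠ 0) {i : ℕ} (h : i < mu.length) :
    absPrefix mu i < absPrefix mu (i + 1) := by
  rw [absPrefix_succ_of_lt h]
  have := getD_ne_zero hne h
  omega

/-- Existence of the block containing `m`. -/
lemma exists_blk {mu : List ℤ} {m : ℕ} (hm : m < (mu.map Int.natAbs).sum) :
    ∃ i, i < mu.length ∧ absPrefix mu i ≤ m ∧ m < absPrefix mu (i + 1) := by
  induction mu generalizing m with
  | nil => simp at hm
  | cons x l ih =>
    by_cases hx : m < x.natAbs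
    · exact ⟨0, by simp, by simp [absPrefix_zero], by
        rw [absPrefix_cons_succ]; omega⟩
    · have hm' : m - x.natAbs < (l.map Int.natAbs).sum := by
        simp at hm; omega
      obtain ⟨i, hi, h1, h2⟩ := ih hm'
      exact ⟨i + 1, by simpa using hi, by rw [absPrefix_cons_succ]; omega,
        by rw [absPrefix_cons_succ]; omega⟩

/-- Uniqueness of the block containing `m`. -/
lemma blk_unique {mu : List ℤ} {m i i' : ℕ}
    (h1 : absPrefix mu i ≤ m) (h2 : m < absPrefix mu (i + 1))
    (h1' : absPrefix mu i' ≤ m) (h2' : m < absPrefix mu (i' + 1)) : i = i' := by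
  by_contra hne
  rcases Nat.lt_or_ge i i' with h | h
  · have := absPrefix_mono mu (show i + 1 ≤ i' from h)
    omega
  · have := absPrefix_mono mu (show i' + 1 ≤ i from by omega)
    omega

lemma posAt_nil {o m : ℕ} : ¬ PosAt [] o m := by
  rintro ⟨i, hi, _⟩; simp at hi

lemma posAt_cons {x : ℤ} {l : List ℤ} {o m : ℕ} :
    PosAt (x :: l) o m ↔
      (0 < x ∧ o ≤ m ∧ m < o + x.natAbs) ∨ PosAt l (o + x.natAbs) m := by
  constructor
  · rintro ⟨i, hi, hx, ha, hb⟩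
    cases i with
    | zero =>
      left
      rw [absPrefix_zero] at ha
      rw [absPrefix_cons_succ, absPrefix_zero] at hb
      exact ⟨by simpa using hx, by omega, by omega⟩
    | succ i =>
      right
      rw [absPrefix_cons_succ] at ha hb
      exact ⟨i, by simpa using hi, by simpa using hx, by omega, by omega⟩
  · rintro (⟨hx, ha, hb⟩ | ⟨i, hi, hx, ha, hb⟩)
    · exact ⟨0, by simp, by simpa using hx, by simp [absPrefix_zero, ha],
        by rw [absPrefix_cons_succ, absPrefix_zero]; omega⟩
    · exact ⟨i + 1, by simpa using hi, by simpa using hx,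
        by rw [absPrefix_cons_succ]; omega,
        by rw [absPrefix_cons_succ]; omega⟩

lemma posAt_ge {mu : List ℤ} {o m : ℕ} (h : PosAt mu o m) : o ≤ m := by
  obtain ⟨i, _, _, h1, _⟩ := h; omega

lemma bdry_nil {o m : ℕ} : Bdry [] o m ↔ m = o := by
  constructor
  · rintro ⟨i, hi⟩; rw [absPrefix_nil] at hi; omega
  · rintro rfl; exact ⟨0, by simp [absPrefix_zero]⟩

lemma bdry_cons {x : ℤ} {l : List ℤ} {o m : ℕ} :
    Bdry (x :: l) o m ↔ m = o ∨ Bdry l (o + x.natAbs) m := by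
  constructor
  · rintro ⟨i, hi⟩
    cases i with
    | zero => left; rw [absPrefix_zero] at hi; omega
    | succ i => right; exact ⟨i, by rw [absPrefix_cons_succ] at hi; omega⟩
  · rintro (rfl | ⟨i, hi⟩)
    · exact ⟨0, by simp [absPrefix_zero]⟩
    · exact ⟨i + 1, by rw [absPrefix_cons_succ]; omega⟩

lemma bdry_self (mu : List ℤ) (o : ℕ) : Bdry mu o o := ⟨0, by simp [absPrefix_zero]⟩

lemma bdry_sum (mu : List ℤ) (o : ℕ) : Bdry mu o (o + (mu.map Int.natAbs).sum) :=
  ⟨mu.length, by rw [absPrefix_of_le (le_refl _)]⟩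

lemma bdry_le {mu : List ℤ} {o m : ℕ} (h : Bdry mu o m) :
    o ≤ m ∧ m ≤ o + (mu.map Int.natAbs).sum := by
  obtain ⟨i, hi⟩ := h
  have := absPrefix_le_sum mu i
  omega

lemma inblk_lt {mu : List ℤ} {o m : ℕ} (h : InBlk mu o m) :
    o ≤ m ∧ m + 1 < o + (mu.map Int.natAbs).sum := by
  obtain ⟨i, hi, h1, h2⟩ := h
  have := absPrefix_le_sum mu (i + 1)
  omega

lemma absPrefix_clamp (mu : List ℤ) (i : ℕ) :
    absPrefix mu i = absPrefix mu (min i mu.length) := by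
  rcases le_total i mu.length with h | h
  · rw [min_eq_left h]
  · rw [min_eq_right h, absPrefix_of_le h, absPrefix_of_le (le_refl _)]

lemma inblk_iff {mu : List ℤ} (hne : ∀ x ∈ mu, x ≠ 0) {m : ℕ}
    (hm : m + 1 < (mu.map Int.natAbs).sum) :
    InBlk mu 0 m ↔ ¬ Bdry mu 0 (m + 1) := by
  constructor
  · rintro ⟨i, hi, h1, h2⟩ ⟨i', hi'⟩
    simp only [Nat.zero_add] at h1 h2 hi'
    rw [absPrefix_clamp] at hi'
    set i'' := min i' mu.length with hi''def
    have hi''le : i'' ≤ mu.length := min_le_right _ _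
    -- absPrefix i ≤ m < m+1 = absPrefix i'' < absPrefix (i+1)
    have hlt1 : i < i'' := by
      by_contra hcon
      have := absPrefix_mono mu (show i'' ≤ i by omega)
      omega
    have hlt2 : i'' < i + 1 := by
      by_contra hcon
      have := absPrefix_mono mu (show i + 1 ≤ i'' by omega)
      omega
    omega
  · intro hb
    obtain ⟨i, hi, h1, h2⟩ := exists_blk (show m < (mu.map Int.natAbs).sum by omega)
    refine ⟨i, hi, by omega, ?_⟩
    have : m + 1 ≠ absPrefix mu (i + 1) := fun hcon => hb ⟨i + 1, by omega⟩
    omega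

/-- Extensionality: a signed composition is determined by its boundary and positivity data. -/
lemma comp_ext : ∀ (mu : List ℤ) (nu : List ℤ) (o : ℕ),
    (∀ x ∈ mu, x ≠ 0) → (∀ x ∈ nu, x ≠ 0) →
    (∀ m, Bdry mu o m ↔ Bdry nu o m) →
    (∀ m, o ≤ m → m < o + (mu.map Int.natAbs).sum → (PosAt mu o m ↔ PosAt nu o m)) →
    mu = nu := by
  intro mu
  induction mu with
  | nil =>
    rintro (_ | ⟨y, nu⟩) o hmu hnu hb hp
    · rfl
    · exfalso
      have h1 : Bdry (y :: nu) o (o + y.natAbs) :=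
        ⟨1, by rw [absPrefix_cons_succ, absPrefix_zero]; omega⟩
      have h2 := (hb _).mpr h1
      rw [bdry_nil] at h2
      have := hnu y (by simp)
      omega
  | cons x mu ih =>
    rintro (_ | ⟨y, nu⟩) o hmu hnu hb hp
    · exfalso
      have h1 : Bdry (x :: mu) o (o + x.natAbs) :=
        ⟨1, by rw [absPrefix_cons_succ, absPrefix_zero]; omega⟩
      have h2 := (hb _).mp h1
      rw [bdry_nil] at h2
      have := hmu x (by simp)
      omega
    · have hx0 : x ≠ 0 := hmu x (by simp)
      have hy0 : y ≠ 0 := hnu y (by simp)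
      -- |x| = |y|
      have hxy : x.natAbs = y.natAbs := by
        have h1 : Bdry (y :: nu) o (o + x.natAbs) :=
          (hb _).mp ⟨1, by rw [absPrefix_cons_succ, absPrefix_zero]; omega⟩
        have h2 : Bdry (x :: mu) o (o + y.natAbs) :=
          (hb _).mpr ⟨1, by rw [absPrefix_cons_succ, absPrefix_zero]; omega⟩
        rw [bdry_cons] at h1 h2
        rcases h1 with h1 | h1
        · omega
        · rcases h2 with h2 | h2
          · omega
          · have := (bdry_le h1).1
            have := (bdry_le h2).1
            omega
      -- signs agree
      have hsum : x.natAbs ≤ ((x :: mu).map Int.natAbs).sum := by simp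
      have hpos : (0 < x) ↔ (0 < y) := by
        have h0 := hp o (le_refl o) (by simp; omega)
        rw [posAt_cons, posAt_cons] at h0
        constructor
        · intro hx
          rcases h0.mp (Or.inl ⟨hx, le_refl o, by omega⟩) with ⟨h, _⟩ | h
          · exact h
          · have := posAt_ge h; omega
        · intro hy
          rcases h0.mpr (Or.inl ⟨hy, le_refl o, by omega⟩) with ⟨h, _⟩ | h
          · exact h
          · have := posAt_ge h; omega
      have hxy2 : x = y := by omega
      subst hxy2
      -- tails
      have htail : mu = nu := by
        refine ih nu (o + x.natAbs) (fun z hz => hmu z (by simp [hz]))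
          (fun z hz => hnu z (by simp [hz])) ?_ ?_
        · intro m
          constructor
          · intro h
            have hge := (bdry_le h).1
            have := (hb m).mp (bdry_cons.mpr (Or.inr h))
            rw [bdry_cons] at this
            rcases this with h' | h'
            · omega
            · exact h'
          · intro h
            have hge := (bdry_le h).1
            have := (hb m).mpr (bdry_cons.mpr (Or.inr h))
            rw [bdry_cons] at this
            rcases this with h' | h'
            · omega
            · exact h'
        · intro m hm1 hm2
          have := hp m (by omega) (by simp at hm2 ⊢; omega)
          rw [posAt_cons, posAt_cons] at this
          constructor
          · intro h
            rcases this.mp (Or.inr h) with h' | h'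
            · omega
            · exact h'
          · intro h
            rcases this.mpr (Or.inr h) with h' | h'
            · omega
            · exact h'
      rw [htail]

end Lists

section GroupBasics

variable {r n : ℕ}

lemma act_apply (w : Equiv.Perm (Fin n)) (f : Multiplicative (Fin n → ZMod r)) (x : Fin n) :
    Multiplicative.toAdd (act r n w f) x = Multiplicative.toAdd f (w⁻¹ x) := rfl

lemma one_ne_zero_zmod (hr : 2 ≤ r) : (1 : ZMod r) ≠ 0 := by
  haveI : Fact (1 < r) := ⟨hr⟩
  exact one_ne_zero

lemma tGen_inj (hr : 2 ≤ r) {i j : Fin n} (h : tGen r n i = tGen r n j) : i = j := by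
  by_contra hne
  have h2 := congrArg (fun g : Grn r n => Multiplicative.toAdd g.left i) h
  simp only [tGen, left_inl, toAdd_ofAdd] at h2
  rw [Pi.single_eq_same, Pi.single_eq_of_ne hne] at h2
  exact one_ne_zero_zmod hr h2

lemma tGen_ne_sGen {i i' j' : Fin n} (h' : i' ≠ j') : tGen r n i ≠ sGen r n i' j' := by
  intro h
  have h2 : (1 : Equiv.Perm (Fin n)) = Equiv.swap i' j' := congrArg SemidirectProduct.right h
  exact h' (Equiv.swap_eq_one_iff.mp h2.symm)

lemma sGen_eq_iff {j k j' k' : Fin n} (hk : (k : ℕ) = (j : ℕ) + 1) (hk' : (k' : ℕ) = (j' : ℕ) + 1)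
    (h : sGen r n j k = sGen r n j' k') : j = j' ∧ k = k' := by
  have hs : Equiv.swap j k = Equiv.swap j' k' := inr_injective h
  have hjk : j ≠ k := by intro e; rw [e] at hk; omega
  have h1 : Equiv.swap j' k' j = k := by rw [← hs]; exact Equiv.swap_apply_left j k
  by_cases hj : j = j'
  · subst hj
    rw [Equiv.swap_apply_left] at h1
    exact ⟨rfl, h1.symm⟩
  · by_cases hj2 : j = k'
    · exfalso
      subst hj2
      rw [Equiv.swap_apply_right] at h1
      rw [h1] at hk'
      omega
    · rw [Equiv.swap_apply_of_ne_of_ne hj hj2] at h1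
      exact absurd h1 hjk

lemma act_swap_single (i j : Fin n) :
    act r n (Equiv.swap i j) (Multiplicative.ofAdd (Pi.single i (1 : ZMod r))) =
      Multiplicative.ofAdd (Pi.single j 1) := by
  have key : ∀ x, Multiplicative.toAdd (act r n (Equiv.swap i j)
      (Multiplicative.ofAdd (Pi.single i (1 : ZMod r)))) x = (Pi.single j (1 : ZMod r) : Fin n → ZMod r) x := by
    intro x
    rw [act_apply, toAdd_ofAdd, Equiv.swap_inv]
    rcases eq_or_ne x j with rfl | hxj
    · rw [Equiv.swap_apply_right, Pi.single_eq_same, Pi.single_eq_same]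
    · rw [Pi.single_eq_of_ne hxj, Pi.single_eq_of_ne]
      intro hc
      exact hxj ((Equiv.swap i j).injective (hc.trans (Equiv.swap_apply_right i j).symm))
  exact Multiplicative.toAdd.injective (funext key)

lemma sGen_conj (i j : Fin n) :
    sGen r n i j * tGen r n i * (sGen r n i j)⁻¹ = tGen r n j := by
  have h := inl_aut (φ := act r n) (Equiv.swap i j) (Multiplicative.ofAdd (Pi.single i 1))
  rw [act_swap_single] at h
  simpa [tGen, sGen, ← map_inv, Equiv.swap_inv] using h.symm

lemma sGen_comm (i j : Fin n) : sGen r n i j = sGen r n j i := by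
  rw [sGen, sGen, Equiv.swap_comm]

lemma tGen_mem_piMu (hr : 2 ≤ r) {mu : List ℤ} {j : Fin n} :
    tGen r n j ∈ PiMu r n mu ↔ PosAt mu 0 (j : ℕ) := by
  constructor
  · rintro (⟨j', ⟨i, hi, hpos, h1, h2⟩, hj⟩ | ⟨j', k', hk', _, hj⟩)
    · obtain rfl := tGen_inj hr hj
      exact ⟨i, hi, hpos, by omega, by omega⟩
    · exact absurd hj (tGen_ne_sGen (by intro e; rw [e] at hk'; omega))
  · rintro ⟨i, hi, hpos, h1, h2⟩
    exact Or.inl ⟨j, ⟨i, hi, hpos, by omega, by omega⟩, rfl⟩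

lemma sGen_mem_piMu (hr : 2 ≤ r) {mu : List ℤ} {j k : Fin n} (hk : (k : ℕ) = (j : ℕ) + 1) :
    sGen r n j k ∈ PiMu r n mu ↔ InBlk mu 0 (j : ℕ) := by
  constructor
  · rintro (⟨j', _, hj⟩ | ⟨j', k', hk', ⟨i, hi, h1, h2⟩, hj⟩)
    · exact absurd hj.symm (tGen_ne_sGen (by intro e; rw [e] at hk; omega))
    · obtain ⟨rfl, rfl⟩ := sGen_eq_iff hk hk' hj
      exact ⟨i, hi, by omega, by omega⟩
  · rintro ⟨i, hi, h1, h2⟩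
    exact Or.inr ⟨j, k, hk, ⟨i, hi, by omega, by omega⟩, rfl⟩

lemma piMu_subset_piSet (mu : List ℤ) : PiMu r n mu ⊆ PiSet r n := by
  rintro g (⟨j, _, rfl⟩ | ⟨j, k, hk, _, rfl⟩)
  · exact Or.inl ⟨j, rfl⟩
  · exact Or.inr ⟨j, k, hk, rfl⟩

/-- The subgroup of elements whose permutation part stabilizes `S`. -/
def permStab (r n : ℕ) (S : Finset (Fin n)) : Subgroup (Grn r n) where
  carrier := {g | ∀ x, x ∈ S ↔ g.right x ∈ S}
  one_mem' := fun x => by simp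
  mul_mem' := fun {a b} ha hb x => by
    rw [mul_right, Equiv.Perm.mul_apply]
    exact (hb x).trans (ha _)
  inv_mem' := fun {a} ha x => by
    rw [inv_right]
    have h := ha (a.right⁻¹ x)
    simpa using h.symm

/-- The subgroup of elements whose permutation part stabilizes `S` and whose torus part
sums to zero over `S`. -/
def sumZero (r n : ℕ) (S : Finset (Fin n)) : Subgroup (Grn r n) where
  carrier := {g | (∀ x, x ∈ S ↔ g.right x ∈ S) ∧
    ∑ x ∈ S, Multiplicative.toAdd g.left x = 0}
  one_mem' := ⟨fun x => by simp, by simp⟩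
  mul_mem' := fun {a b} ha hb => by
    refine ⟨fun x => by
      rw [mul_right, Equiv.Perm.mul_apply]; exact (hb.1 x).trans (ha.1 _), ?_⟩
    have hpt : ∀ x, Multiplicative.toAdd (a * b).left x =
        Multiplicative.toAdd a.left x + Multiplicative.toAdd b.left (a.right⁻¹ x) := by
      intro x; rfl
    rw [Finset.sum_congr rfl (fun x _ => hpt x), Finset.sum_add_distrib]
    have hsum : ∑ x ∈ S, Multiplicative.toAdd b.left (a.right⁻¹ x)
        = ∑ x ∈ S, Multiplicative.toAdd b.left x := by
      refine Finset.sum_equiv (a.right⁻¹ : Equiv.Perm (Fin n)) (fun i => ?_) (fun i _ => rfl)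
      have h := ha.1 (a.right⁻¹ i)
      simpa using h.symm
    rw [hsum, ha.2, hb.2, add_zero]
  inv_mem' := fun {a} ha => by
    refine ⟨fun x => by
      rw [inv_right]
      have h := ha.1 (a.right⁻¹ x)
      simpa using h.symm, ?_⟩
    have hpt : ∀ x, Multiplicative.toAdd (a⁻¹).left x =
        - Multiplicative.toAdd a.left (a.right x) := by
      intro x; rfl
    rw [Finset.sum_congr rfl (fun x _ => hpt x)]
    have hsum : ∑ x ∈ S, Multiplicative.toAdd a.left (a.right x)
        = ∑ x ∈ S, Multiplicative.toAdd a.left x := by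
      refine Finset.sum_equiv (a.right : Equiv.Perm (Fin n)) (fun i => ha.1 i) (fun i _ => rfl)
    rw [Finset.sum_neg_distrib, hsum, ha.2, neg_zero]

end GroupBasics

section Membership

variable {r n : ℕ}

lemma swap_stab_iff {S : Finset (Fin n)} {j k : Fin n} (h : j ∈ S ↔ k ∈ S) (x : Fin n) :
    x ∈ S ↔ Equiv.swap j k x ∈ S := by
  rcases eq_or_ne x j with rfl | hxj
  · rw [Equiv.swap_apply_left]; exact h
  · rcases eq_or_ne x k with rfl | hxk
    · rw [Equiv.swap_apply_right]; exact h.symm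
    · rw [Equiv.swap_apply_of_ne_of_ne hxj hxk]

lemma mem_Gmu_tGen (hr : 2 ≤ r) {mu : List ℤ} (hmu : IsSignedComp n mu) (j : Fin n) :
    tGen r n j ∈ Gmu r n mu ↔ PosAt mu 0 (j : ℕ) := by
  constructor
  case mpr => exact fun h => Subgroup.subset_closure ((tGen_mem_piMu hr).mpr h)
  intro hmem
  by_contra hnp
  obtain ⟨i0, hi0, h1, h2⟩ := exists_blk (mu := mu) (m := (j : ℕ)) (by rw [hmu.2]; exact j.2)
  set S : Finset (Fin n) := Finset.univ.filter
    (fun x : Fin n => absPrefix mu i0 ≤ (x : ℕ) ∧ (x : ℕ) < absPrefix mu (i0 + 1)) with hS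
  have hmemS : ∀ x : Fin n,
      x ∈ S ↔ (absPrefix mu i0 ≤ (x : ℕ) ∧ (x : ℕ) < absPrefix mu (i0 + 1)) := by
    intro x; simp [hS]
  have hle : Gmu r n mu ≤ sumZero r n S := by
    rw [Gmu, Subgroup.closure_le]
    rintro g (⟨j', ⟨i, hi, hpos, ha, hb⟩, rfl⟩ | ⟨j', k', hk', ⟨i, hi, ha, hb⟩, rfl⟩)
    · refine ⟨fun x => by simp [tGen, right_inl], ?_⟩
      have hsum : ∑ x ∈ S, Multiplicative.toAdd (tGen r n j').left x
          = ∑ x ∈ S, (Pi.single j' (1 : ZMod r) : Fin n → ZMod r) x := rfl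
      rw [hsum]
      have hnotin : j' ∉ S := by
        rw [hmemS]
        rintro ⟨c1, c2⟩
        obtain rfl := blk_unique ha hb c1 c2
        exact hnp ⟨i, hi, hpos, by omega, by omega⟩
      have : ∀ x ∈ S, (Pi.single j' (1 : ZMod r) : Fin n → ZMod r) x = 0 := by
        intro x hx
        exact Pi.single_eq_of_ne (fun hc => hnotin (by rwa [hc] at hx)) _
      exact Finset.sum_eq_zero this
    · refine ⟨?_, by simp [sGen, left_inr]⟩
      have hkey : (j' ∈ S) ↔ (k' ∈ S) := by
        rw [hmemS, hmemS]
        constructor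
        · rintro ⟨c1, c2⟩
          obtain rfl := blk_unique ha (show (j' : ℕ) < absPrefix mu (i + 1) by omega) c1 c2
          exact ⟨by omega, by omega⟩
        · rintro ⟨c1, c2⟩
          obtain rfl := blk_unique (m := (k' : ℕ)) (by omega) hb c1 c2
          exact ⟨by omega, by omega⟩
      intro x
      have := swap_stab_iff hkey x
      simpa [sGen, right_inr] using this
  have hKmem := hle hmem
  have hsum1 : ∑ x ∈ S, Multiplicative.toAdd (tGen r n j).left x
      = ∑ x ∈ S, (Pi.single j (1 : ZMod r) : Fin n → ZMod r) x := rfl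
  have hjS : j ∈ S := by rw [hmemS]; exact ⟨h1, h2⟩
  have := hKmem.2
  rw [hsum1, Finset.sum_eq_single_of_mem j hjS
    (fun x _ hx => Pi.single_eq_of_ne hx _), Pi.single_eq_same] at this
  exact one_ne_zero_zmod hr this

lemma mem_Gmu_sGen (hr : 2 ≤ r) {mu : List ℤ} (hmu : IsSignedComp n mu) {j k : Fin n}
    (hk : (k : ℕ) = (j : ℕ) + 1) :
    sGen r n j k ∈ Gmu r n mu ↔ InBlk mu 0 (j : ℕ) := by
  constructor
  case mpr => exact fun h => Subgroup.subset_closure ((sGen_mem_piMu hr hk).mpr h)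
  intro hmem
  by_contra hni
  obtain ⟨i0, hi0, h1, h2⟩ := exists_blk (mu := mu) (m := (j : ℕ)) (by rw [hmu.2]; exact j.2)
  have hb2 : absPrefix mu (i0 + 1) = (j : ℕ) + 1 := by
    have : ¬ ((j : ℕ) + 1 < absPrefix mu (i0 + 1)) := fun hc => hni ⟨i0, hi0, by omega, by omega⟩
    omega
  set S : Finset (Fin n) := Finset.univ.filter
    (fun x : Fin n => (x : ℕ) < absPrefix mu (i0 + 1)) with hS
  have hmemS : ∀ x : Fin n, x ∈ S ↔ (x : ℕ) < absPrefix mu (i0 + 1) := by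
    intro x; simp [hS]
  have hle : Gmu r n mu ≤ permStab r n S := by
    rw [Gmu, Subgroup.closure_le]
    rintro g (⟨j', _, rfl⟩ | ⟨j', k', hk', ⟨i, hi, ha, hb⟩, rfl⟩)
    · exact fun x => by simp [tGen, right_inl]
    · have hkey : (j' ∈ S) ↔ (k' ∈ S) := by
        rw [hmemS, hmemS]
        rcases le_or_gt (absPrefix mu (i + 1)) (absPrefix mu (i0 + 1)) with hc | hc
        · omega
        · have hii : i0 + 1 ≤ i := by
            by_contra hcon
            have := absPrefix_mono mu (show i + 1 ≤ i0 + 1 by omega)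
            omega
          have := absPrefix_mono mu hii
          omega
      intro x
      have := swap_stab_iff hkey x
      simpa [sGen, right_inr] using this
  have hKmem := hle hmem
  have := hKmem j
  rw [show (sGen r n j k).right = Equiv.swap j k from rfl, Equiv.swap_apply_left,
    hmemS, hmemS] at this
  omega

lemma gmu_inj (hr : 2 ≤ r) {mu nu : List ℤ} (hmu : IsSignedComp n mu) (hnu : IsSignedComp n nu)
    (h : Gmu r n mu = Gmu r n nu) : mu = nu := by
  refine comp_ext mu nu 0 hmu.1 hnu.1 ?_ ?_
  · intro m
    by_cases hm0 : m = 0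
    · subst hm0
      exact iff_of_true (bdry_self mu 0) (bdry_self nu 0)
    by_cases hmbig : n < m
    · refine iff_of_false (fun hc => ?_) (fun hc => ?_)
      · have := (bdry_le hc).2; rw [hmu.2] at this; omega
      · have := (bdry_le hc).2; rw [hnu.2] at this; omega
    by_cases hmn : m = n
    · subst hmn
      refine iff_of_true ⟨mu.length, ?_⟩ ⟨nu.length, ?_⟩
      · rw [absPrefix_of_le (le_refl _), hmu.2]; omega
      · rw [absPrefix_of_le (le_refl _), hnu.2]; omega
    -- 0 < m < n
    have e1 : InBlk mu 0 (m - 1) ↔ ¬ Bdry mu 0 m := by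
      have := inblk_iff hmu.1 (mu := mu) (m := m - 1) (by rw [hmu.2]; omega)
      rwa [show m - 1 + 1 = m by omega] at this
    have e2 : InBlk nu 0 (m - 1) ↔ ¬ Bdry nu 0 m := by
      have := inblk_iff hnu.1 (mu := nu) (m := m - 1) (by rw [hnu.2]; omega)
      rwa [show m - 1 + 1 = m by omega] at this
    have e3 : InBlk mu 0 (m - 1) ↔ InBlk nu 0 (m - 1) := by
      have hk : ((⟨m, by omega⟩ : Fin n) : ℕ) = ((⟨m - 1, by omega⟩ : Fin n) : ℕ) + 1 := by
        simp; omega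
      have t1 := mem_Gmu_sGen (r := r) hr hmu hk
      have t2 := mem_Gmu_sGen (r := r) hr hnu hk
      rw [← t1, ← t2, h]
    tauto
  · intro m hm0 hmn
    have hmn' : m < n := by have := hmu.2; omega
    have t1 := mem_Gmu_tGen (r := r) hr hmu ⟨m, hmn'⟩
    have t2 := mem_Gmu_tGen (r := r) hr hnu ⟨m, hmn'⟩
    rw [← t1, ← t2, h]

end Membership

section Canonical

/-- All gaps from `a` (inclusive) to `b` (exclusive) are joined. -/
def Conn (SS : ℕ → Prop) (a b : ℕ) : Prop := ∀ q, a ≤ q → q < b → SS q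

lemma conn_trivial {SS : ℕ → Prop} {a b : ℕ} (h : b ≤ a) : Conn SS a b := by
  intro q h1 h2
  exact absurd h (by omega)

lemma conn_single {SS : ℕ → Prop} {p : ℕ} (hss : SS p) : Conn SS p (p + 1) := by
  intro q h1 h2
  have : q = p := by omega
  rwa [this]

lemma conn_shift {SS : ℕ → Prop} {a b : ℕ} (hss : SS a) :
    Conn SS a b ↔ Conn SS (a + 1) b := by
  constructor
  · intro h q h1 h2; exact h q (by omega) h2
  · intro h q h1 h2
    rcases eq_or_lt_of_le h1 with rfl | h1'
    · exact hss
    · exact h q (by omega) h2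

open scoped Classical in
/-- A block entry: `c` or `-c` according as `h` holds. -/
noncomputable def mkblk (c : ℕ) (h : Prop) : ℤ := if h then (c : ℤ) else -(c : ℤ)

open scoped Classical in
/-- The canonical signed composition built from torus data `TS` and gap data `SS`,
processing positions from left to right.  `p` is the current position, `c ≥ 1` the size of
the currently open block and `h` records whether the open block contains a generator `t`. -/
noncomputable def go (TS SS : ℕ → Prop) : ℕ → ℕ → ℕ → Prop → List ℤ
  | 0, _, c, h => [mkblk c h]
  | (fuel+1), p, c, h =>
    if SS p then go TS SS fuel (p + 1) (c + 1) (h ∨ TS (p + 1))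
    else mkblk c h :: go TS SS fuel (p + 1) 1 (TS (p + 1))

lemma mkblk_natAbs (c : ℕ) (h : Prop) : (mkblk c h).natAbs = c := by
  by_cases hh : h <;> simp [mkblk, hh]

lemma mkblk_ne_zero {c : ℕ} (hc : 1 ≤ c) (h : Prop) : mkblk c h ≠ 0 := by
  by_cases hh : h <;> simp [mkblk, hh] <;> omega

lemma mkblk_pos_iff {c : ℕ} (hc : 1 ≤ c) {h : Prop} : 0 < mkblk c h ↔ h := by
  by_cases hh : h <;> simp [mkblk, hh] <;> omega

lemma go_zero (TS SS : ℕ → Prop) (p c : ℕ) (h : Prop) :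
    go TS SS 0 p c h = [mkblk c h] := rfl

open scoped Classical in
lemma go_succ (TS SS : ℕ → Prop) (fuel p c : ℕ) (h : Prop) :
    go TS SS (fuel + 1) p c h =
      if SS p then go TS SS fuel (p + 1) (c + 1) (h ∨ TS (p + 1))
      else mkblk c h :: go TS SS fuel (p + 1) 1 (TS (p + 1)) := rfl

lemma go_nonzero {TS SS : ℕ → Prop} :
    ∀ fuel p c (h : Prop), 1 ≤ c → ∀ x ∈ go TS SS fuel p c h, x ≠ 0 := by
  intro fuel
  induction fuel with
  | zero =>
    intro p c h hc x hx
    rw [go_zero] at hx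
    simp only [List.mem_singleton] at hx
    subst hx
    exact mkblk_ne_zero hc h
  | succ fuel ih =>
    intro p c h hc x hx
    rw [go_succ] at hx
    split_ifs at hx with hss
    · exact ih _ _ _ (by omega) x hx
    · rcases List.mem_cons.mp hx with rfl | hx'
      · exact mkblk_ne_zero hc h
      · exact ih _ _ _ (le_refl 1) x hx'

lemma go_sum {TS SS : ℕ → Prop} :
    ∀ fuel p c (h : Prop), ((go TS SS fuel p c h).map Int.natAbs).sum = c + fuel := by
  intro fuel
  induction fuel with
  | zero => intro p c h; simp [go_zero, mkblk_natAbs]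
  | succ fuel ih =>
    intro p c h
    rw [go_succ]
    split_ifs with hss
    · rw [ih]; omega
    · simp only [List.map_cons, List.sum_cons, mkblk_natAbs, ih]; omega

lemma go_bdry {TS SS : ℕ → Prop} :
    ∀ fuel p c (h : Prop) o m, o + c = p + 1 →
    (Bdry (go TS SS fuel p c h) o m ↔
      (m = o ∨ m = p + 1 + fuel ∨ (p + 1 ≤ m ∧ m ≤ p + fuel ∧ ¬ SS (m - 1)))) := by
  intro fuel
  induction fuel with
  | zero =>
    intro p c h o m ho
    rw [go_zero, bdry_cons, bdry_nil, mkblk_natAbs]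
    constructor
    · rintro (h2 | h2)
      · exact Or.inl h2
      · exact Or.inr (Or.inl (by omega))
    · rintro (h2 | h2 | ⟨h2, h3, _⟩)
      · exact Or.inl h2
      · exact Or.inr (by omega)
      · omega
  | succ fuel ih =>
    intro p c h o m ho
    rw [go_succ]
    by_cases hss : SS p
    · rw [if_pos hss, ih (p + 1) (c + 1) _ o m (by omega)]
      constructor
      · rintro (h2 | h2 | ⟨h2, h3, h4⟩)
        · exact Or.inl h2
        · exact Or.inr (Or.inl (by omega))
        · exact Or.inr (Or.inr ⟨by omega, by omega, h4⟩)
      · rintro (h2 | h2 | ⟨h2, h3, h4⟩)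
        · exact Or.inl h2
        · exact Or.inr (Or.inl (by omega))
        · rcases eq_or_lt_of_le h2 with h5 | h5
          · exact absurd hss (by rw [show p = m - 1 by omega]; exact h4)
          · exact Or.inr (Or.inr ⟨by omega, by omega, h4⟩)
    · rw [if_neg hss, bdry_cons, mkblk_natAbs, ih (p + 1) 1 _ (o + c) m (by omega)]
      constructor
      · rintro (rfl | h2 | h2 | ⟨h2, h3, h4⟩)
        · exact Or.inl rfl
        · exact Or.inr (Or.inr ⟨by omega, by omega,
            by rw [show m - 1 = p by omega]; exact hss⟩)
        · exact Or.inr (Or.inl (by omega))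
        · exact Or.inr (Or.inr ⟨by omega, by omega, h4⟩)
      · rintro (h2 | h2 | ⟨h2, h3, h4⟩)
        · exact Or.inl h2
        · exact Or.inr (Or.inr (Or.inl (by omega)))
        · rcases eq_or_lt_of_le h2 with h5 | h5
          · exact Or.inr (Or.inl (by omega))
          · exact Or.inr (Or.inr (Or.inr ⟨by omega, by omega, h4⟩))
  
lemma go_pos {TS SS : ℕ → Prop} :
    ∀ fuel p c (h : Prop) o m, o + c = p + 1 → 1 ≤ c → o ≤ m → m < p + 1 + fuel →
    (PosAt (go TS SS fuel p c h) o m ↔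
      ((Conn SS p (max m p) ∧ h) ∨
        ∃ q, p < q ∧ q < p + 1 + fuel ∧ Conn SS (min (max m p) q) (max (max m p) q) ∧ TS q)) := by
  intro fuel
  induction fuel with
  | zero =>
    intro p c h o m ho hc hom hm
    rw [go_zero, posAt_cons, mkblk_natAbs, max_eq_right (show m ≤ p by omega)]
    constructor
    · rintro (⟨hpos, _, _⟩ | h2)
      · exact Or.inl ⟨conn_trivial (le_refl p), (mkblk_pos_iff hc).mp hpos⟩
      · exact absurd h2 posAt_nil
    · rintro (⟨_, hh⟩ | ⟨q, hq1, hq2, _, _⟩)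
      · exact Or.inl ⟨(mkblk_pos_iff hc).mpr hh, by omega, by omega⟩
      · omega
  | succ fuel ih =>
    intro p c h o m ho hc hom hm
    rw [go_succ]
    by_cases hss : SS p
    · rw [if_pos hss,
        ih (p + 1) (c + 1) (h ∨ TS (p + 1)) o m (by omega) (by omega) hom (by omega)]
      rcases le_or_gt m p with hmp | hmp
      · rw [max_eq_right hmp, max_eq_right (show m ≤ p + 1 by omega)]
        constructor
        · rintro (⟨_, (hh | hts)⟩ | ⟨q, hq1, hq2, hconn, hts⟩)
          · exact Or.inl ⟨conn_trivial (le_refl p), hh⟩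
          · refine Or.inr ⟨p + 1, by omega, by omega, ?_, hts⟩
            rw [min_eq_left (by omega), max_eq_right (by omega)]
            exact conn_single hss
          · refine Or.inr ⟨q, by omega, by omega, ?_, hts⟩
            rw [min_eq_left (by omega), max_eq_right (by omega)]
            rw [min_eq_left (by omega), max_eq_right (by omega)] at hconn
            exact (conn_shift hss).mpr hconn
        · rintro (⟨_, hh⟩ | ⟨q, hq1, hq2, hconn, hts⟩)
          · exact Or.inl ⟨conn_trivial (le_refl (p + 1)), Or.inl hh⟩
          · rw [min_eq_left (by omega), max_eq_right (by omega)] at hconn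
            rcases eq_or_lt_of_le (show p + 1 ≤ q by omega) with rfl | hq3
            · exact Or.inl ⟨conn_trivial (le_refl (p + 1)), Or.inr hts⟩
            · refine Or.inr ⟨q, by omega, by omega, ?_, hts⟩
              rw [min_eq_left (by omega), max_eq_right (by omega)]
              exact (conn_shift hss).mp hconn
      · rw [max_eq_left (show p ≤ m by omega), max_eq_left (show p + 1 ≤ m by omega)]
        constructor
        · rintro (⟨hconn, (hh | hts)⟩ | ⟨q, hq1, hq2, hconn, hts⟩)
          · exact Or.inl ⟨(conn_shift hss).mpr hconn, hh⟩
          · refine Or.inr ⟨p + 1, by omega, by omega, ?_, hts⟩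
            rw [min_eq_right (by omega), max_eq_left (by omega)]
            exact hconn
          · exact Or.inr ⟨q, by omega, by omega, hconn, hts⟩
        · rintro (⟨hconn, hh⟩ | ⟨q, hq1, hq2, hconn, hts⟩)
          · exact Or.inl ⟨(conn_shift hss).mp hconn, Or.inl hh⟩
          · rcases eq_or_lt_of_le (show p + 1 ≤ q by omega) with rfl | hq3
            · rw [min_eq_right (by omega), max_eq_left (by omega)] at hconn
              exact Or.inl ⟨hconn, Or.inr hts⟩
            · exact Or.inr ⟨q, by omega, by omega, hconn, hts⟩
    · rw [if_neg hss, posAt_cons, mkblk_natAbs]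
      rcases le_or_gt m p with hmp | hmp
      · rw [max_eq_right hmp]
        constructor
        · rintro (⟨hpos, _, _⟩ | h2)
          · exact Or.inl ⟨conn_trivial (le_refl p), (mkblk_pos_iff hc).mp hpos⟩
          · exact absurd (posAt_ge h2) (by omega)
        · rintro (⟨_, hh⟩ | ⟨q, hq1, hq2, hconn, hts⟩)
          · exact Or.inl ⟨(mkblk_pos_iff hc).mpr hh, by omega, by omega⟩
          · exfalso
            rw [min_eq_left (by omega), max_eq_right (by omega)] at hconn
            exact hss (hconn p (le_refl p) (by omega))
      · rw [max_eq_left (show p ≤ m by omega)]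
        rw [show o + c = p + 1 from ho,
          ih (p + 1) 1 (TS (p + 1)) (p + 1) m (by omega) (le_refl 1) (by omega) (by omega)]
        rw [max_eq_left (show p + 1 ≤ m by omega)]
        constructor
        · rintro (hbad | (⟨hconn, hts⟩ | ⟨q, hq1, hq2, hconn, hts⟩))
          · exact absurd hbad (by rintro ⟨_, _, _⟩; omega)
          · refine Or.inr ⟨p + 1, by omega, by omega, ?_, hts⟩
            rw [min_eq_right (by omega), max_eq_left (by omega)]
            exact hconn
          · exact Or.inr ⟨q, by omega, by omega, hconn, hts⟩
        · rintro (⟨hconn, _⟩ | ⟨q, hq1, hq2, hconn, hts⟩)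
          · exact absurd (hconn p (le_refl p) (by omega)) hss
          · rcases eq_or_lt_of_le (show p + 1 ≤ q by omega) with rfl | hq3
            · rw [min_eq_right (by omega), max_eq_left (by omega)] at hconn
              exact Or.inr (Or.inl ⟨hconn, hts⟩)
            · exact Or.inr (Or.inr ⟨q, by omega, by omega, hconn, hts⟩)

end Canonical

section Existence

variable {r n : ℕ}

/-- Torus data of a generating set. -/
def TSof (r n : ℕ) (J : Set (Grn r n)) : ℕ → Prop :=
  fun m => ∃ i : Fin n, (i : ℕ) = m ∧ tGen r n i ∈ J

/-- Gap data of a generating set. -/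
def SSof (r n : ℕ) (J : Set (Grn r n)) : ℕ → Prop :=
  fun m => ∃ i j : Fin n, (i : ℕ) = m ∧ (j : ℕ) = m + 1 ∧ sGen r n i j ∈ J

/-- The canonical signed composition attached to a subset of `Π`. -/
noncomputable def compOf (r n : ℕ) (J : Set (Grn r n)) : List ℤ :=
  go (TSof r n J) (SSof r n J) (n - 1) 0 1 (TSof r n J 0)

lemma compOf_signedComp (hn : 1 ≤ n) (J : Set (Grn r n)) : IsSignedComp n (compOf r n J) := by
  constructor
  · exact fun x hx => go_nonzero _ _ _ _ (le_refl 1) x hx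
  · show ((go (TSof r n J) (SSof r n J) (n - 1) 0 1
      (TSof r n J 0)).map Int.natAbs).sum = n
    rw [go_sum]; omega

lemma chain_step (J : Set (Grn r n)) (m : ℕ) (hm : m + 1 < n) (hss : SSof r n J m) :
    (tGen r n ⟨m, by omega⟩ ∈ Subgroup.closure J ↔
      tGen r n ⟨m + 1, hm⟩ ∈ Subgroup.closure J) := by
  obtain ⟨i, j, hi, hj, hmem⟩ := hss
  have hs : sGen r n i j ∈ Subgroup.closure J := Subgroup.subset_closure hmem
  have e1 : (⟨m, by omega⟩ : Fin n) = i := Fin.ext hi.symm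
  have e2 : (⟨m + 1, hm⟩ : Fin n) = j := Fin.ext hj.symm
  rw [e1, e2]
  constructor
  · intro ht
    have h2 := mul_mem (mul_mem hs ht) (inv_mem hs)
    rwa [sGen_conj] at h2
  · intro ht
    have hs' : sGen r n j i ∈ Subgroup.closure J := by rwa [← sGen_comm]
    have h2 := mul_mem (mul_mem hs' ht) (inv_mem hs')
    rwa [sGen_conj] at h2

lemma chain_mem (J : Set (Grn r n)) :
    ∀ (a b : ℕ) (ha : a < n) (hb : b < n), a ≤ b → Conn (SSof r n J) a b →
      (tGen r n ⟨a, ha⟩ ∈ Subgroup.closure J ↔ tGen r n ⟨b, hb⟩ ∈ Subgroup.closure J) := by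
  intro a b
  induction b with
  | zero =>
    intro ha hb hab _
    have : a = 0 := by omega
    subst this
    exact Iff.rfl
  | succ b ihb =>
    intro ha hb hab hconn
    rcases eq_or_lt_of_le hab with rfl | h
    · exact Iff.rfl
    · have h1 := ihb ha (by omega) (by omega) (fun q hq1 hq2 => hconn q hq1 (by omega))
      have h2 := chain_step J b hb (hconn b (by omega) (by omega))
      exact h1.trans h2

lemma closure_eq_gmu (hr : 2 ≤ r) (hn : 1 ≤ n) {J : Set (Grn r n)} (hJ : J ⊆ PiSet r n) :
    Subgroup.closure J = Gmu r n (compOf r n J) := by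
  have hsc := compOf_signedComp (r := r) hn J
  have hsum : ((compOf r n J).map Int.natAbs).sum = n := hsc.2
  have hB : ∀ m, Bdry (compOf r n J) 0 m ↔
      (m = 0 ∨ m = 0 + 1 + (n - 1) ∨
        (0 + 1 ≤ m ∧ m ≤ 0 + (n - 1) ∧ ¬ SSof r n J (m - 1))) :=
    fun m => go_bdry _ _ _ _ _ m (by omega)
  have hP : ∀ m, (0:ℕ) ≤ m → m < 0 + 1 + (n - 1) →
      (PosAt (compOf r n J) 0 m ↔
        ((Conn (SSof r n J) 0 (max m 0) ∧ TSof r n J 0) ∨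
          ∃ q, 0 < q ∧ q < 0 + 1 + (n - 1) ∧
            Conn (SSof r n J) (min (max m 0) q) (max (max m 0) q) ∧ TSof r n J q)) :=
    fun m h1 h2 => go_pos _ _ _ _ _ m (by omega) (le_refl 1) h1 h2
  apply le_antisymm
  · rw [Subgroup.closure_le]
    intro g hg
    rcases hJ hg with ⟨i, rfl⟩ | ⟨i, j, hj, rfl⟩
    · have hts : TSof r n J (i : ℕ) := ⟨i, rfl, hg⟩
      apply Subgroup.subset_closure
      refine (tGen_mem_piMu hr).mpr ?_
      refine (hP (i : ℕ) (by omega) (by have := i.2; omega)).mpr ?_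
      by_cases hi0 : (i : ℕ) = 0
      · exact Or.inl ⟨conn_trivial (by omega), by rw [← hi0]; exact hts⟩
      · refine Or.inr ⟨(i : ℕ), by omega, by have := i.2; omega, ?_, hts⟩
        rw [Nat.max_zero, min_self, max_self]
        exact conn_trivial (le_refl _)
    · have hss : SSof r n J (i : ℕ) := ⟨i, j, rfl, by omega, hg⟩
      have hii : (i : ℕ) + 1 < n := by have := j.2; omega
      apply Subgroup.subset_closure
      refine (sGen_mem_piMu hr hj).mpr ?_
      refine (inblk_iff hsc.1 (by rw [hsum]; omega)).mpr ?_
      intro hbd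
      rcases (hB _).mp hbd with h2 | h2 | ⟨h2, h3, h4⟩
      · omega
      · omega
      · exact h4 (by rwa [show (i : ℕ) + 1 - 1 = (i : ℕ) by omega])
  · rw [Gmu, Subgroup.closure_le]
    rintro g (⟨j', hcond, rfl⟩ | ⟨j', k', hk', hcond, rfl⟩)
    · have hcond' : PosAt (compOf r n J) 0 (j' : ℕ) := by
        obtain ⟨i, hi, hpos, h1, h2⟩ := hcond
        exact ⟨i, hi, hpos, by omega, by omega⟩
      have hRHS := (hP (j' : ℕ) (by omega) (by have := j'.2; omega)).mp hcond'
      have key : ∃ q, q < n ∧ TSof r n J q ∧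
          Conn (SSof r n J) (min (j' : ℕ) q) (max (j' : ℕ) q) := by
        rcases hRHS with ⟨hconn, hts⟩ | ⟨q, hq0, hqlt, hconn, hts⟩
        · refine ⟨0, by omega, hts, ?_⟩
          rw [Nat.max_zero] at hconn
          rwa [Nat.min_zero, Nat.max_zero]
        · refine ⟨q, by omega, hts, ?_⟩
          rwa [Nat.max_zero] at hconn
      obtain ⟨q, hqn, ⟨qf, hqf, hqJ⟩, hconn⟩ := key
      have hq0 : tGen r n ⟨q, hqn⟩ ∈ Subgroup.closure J := by
        rw [show (⟨q, hqn⟩ : Fin n) = qf from Fin.ext (by simp [hqf])]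
        exact Subgroup.subset_closure hqJ
      rcases le_total q (j' : ℕ) with hle | hle
      · have hiff := chain_mem J q (j' : ℕ) hqn j'.2 hle
          (by rwa [min_eq_right hle, max_eq_left hle] at hconn)
        have h2 := hiff.mp hq0
        rwa [show (⟨(j' : ℕ), j'.2⟩ : Fin n) = j' from Fin.ext rfl] at h2
      · have hiff := chain_mem J (j' : ℕ) q j'.2 hqn hle
          (by rwa [min_eq_left hle, max_eq_right hle] at hconn)
        have h2 := hiff.mpr hq0
        rwa [show (⟨(j' : ℕ), j'.2⟩ : Fin n) = j' from Fin.ext rfl] at h2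
    · have hib : InBlk (compOf r n J) 0 (j' : ℕ) := by
        obtain ⟨i, hi, h1, h2⟩ := hcond
        exact ⟨i, hi, by omega, by omega⟩
      have hlt : (j' : ℕ) + 1 < n := by
        have := (inblk_lt hib).2
        rw [hsum] at this
        omega
      have hnb := (inblk_iff hsc.1 (by rw [hsum]; omega)).mp hib
      have hssj : SSof r n J (j' : ℕ) := by
        by_contra hcon
        exact hnb ((hB _).mpr (Or.inr (Or.inr ⟨by omega, by omega,
          by rwa [show (j' : ℕ) + 1 - 1 = (j' : ℕ) by omega]⟩)))
      obtain ⟨i1, j1, hi1, hj1, hmem⟩ := hssj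
      obtain rfl : i1 = j' := Fin.ext (by omega)
      obtain rfl : j1 = k' := Fin.ext (by omega)
      exact Subgroup.subset_closure hmem

end Existence

section Counting

/-- `c` or `-c` according to a boolean sign. -/
def mkb (b : Bool) (c : ℕ) : ℤ := if b then (c : ℤ) else -(c : ℤ)

/-- Decoding a sign together with gap data into a signed composition. -/
def dec : Bool → List (Option Bool) → List ℤ
  | b, [] => [mkb b 1]
  | b, none :: gs =>
    match dec b gs with
    | [] => []
    | x :: l => (x + mkb b 1) :: l
  | b, some b' :: gs => mkb b 1 :: dec b' gs

lemma mkb_natAbs (b : Bool) (c : ℕ) : (mkb b c).natAbs = c := by cases b <;> simp [mkb]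

lemma mkb_ne {c : ℕ} (hc : 1 ≤ c) (b : Bool) : mkb b c ≠ 0 := by
  cases b <;> simp [mkb] <;> omega

lemma mkb_add (b : Bool) (c c' : ℕ) : mkb b c + mkb b c' = mkb b (c + c') := by
  cases b <;> simp [mkb] <;> push_cast <;> ring

lemma mkb_inj {b b' : Bool} {c c' : ℕ} (hc : 1 ≤ c) (hc' : 1 ≤ c')
    (h : mkb b c = mkb b' c') : b = b' ∧ c = c' := by
  cases b <;> cases b' <;> simp [mkb] at h ⊢ <;> omega

lemma dec_shape : ∀ (gs : List (Option Bool)) (b : Bool),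
    ∃ c l, 1 ≤ c ∧ dec b gs = mkb b c :: l := by
  intro gs
  induction gs with
  | nil => intro b; exact ⟨1, [], le_refl 1, rfl⟩
  | cons g gs ih =>
    intro b
    cases g with
    | none =>
      obtain ⟨c, l, hc, hd⟩ := ih b
      refine ⟨c + 1, l, by omega, ?_⟩
      show (match dec b gs with | [] => [] | x :: l => (x + mkb b 1) :: l) = _
      rw [hd]
      show (mkb b c + mkb b 1) :: l = _
      rw [mkb_add]
    | some b' => exact ⟨1, dec b' gs, le_refl 1, rfl⟩

lemma dec_none {b : Bool} {gs : List (Option Bool)} {c : ℕ} {l : List ℤ}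
    (hd : dec b gs = mkb b c :: l) : dec b (none :: gs) = mkb b (c + 1) :: l := by
  show (match dec b gs with | [] => [] | x :: l => (x + mkb b 1) :: l) = _
  rw [hd]
  show (mkb b c + mkb b 1) :: l = _
  rw [mkb_add]

lemma dec_sc : ∀ (gs : List (Option Bool)) (b : Bool),
    IsSignedComp (1 + gs.length) (dec b gs) := by
  intro gs
  induction gs with
  | nil =>
    intro b
    refine ⟨fun x hx => ?_, by simp [dec, mkb_natAbs]⟩
    simp only [dec, List.mem_singleton] at hx
    subst hx
    exact mkb_ne (le_refl 1) b
  | cons g gs ih =>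
    intro b
    cases g with
    | none =>
      obtain ⟨c, l, hc, hd⟩ := dec_shape gs b
      have hih := ih b
      rw [hd] at hih
      rw [dec_none hd]
      refine ⟨fun x hx => ?_, ?_⟩
      · rcases List.mem_cons.mp hx with rfl | hx'
        · exact mkb_ne (by omega) b
        · exact hih.1 x (by simp [hx'])
      · have h2 := hih.2
        simp only [List.map_cons, List.sum_cons, mkb_natAbs] at h2 ⊢
        simp only [List.length_cons]
        omega
    | some b' =>
      have hih := ih b'
      show IsSignedComp _ (mkb b 1 :: dec b' gs)
      refine ⟨fun x hx => ?_, ?_⟩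
      · rcases List.mem_cons.mp hx with rfl | hx'
        · exact mkb_ne (le_refl 1) b
        · exact hih.1 x hx'
      · have h2 := hih.2
        simp only [List.map_cons, List.sum_cons, mkb_natAbs, List.length_cons]
        omega

lemma dec_inj : ∀ (gs gs' : List (Option Bool)) (b b' : Bool),
    gs.length = gs'.length → dec b gs = dec b' gs' → b = b' ∧ gs = gs' := by
  intro gs
  induction gs with
  | nil =>
    intro gs' b b' hlen h
    cases gs' with
    | nil =>
      have h2 : [mkb b 1] = [mkb b' 1] := h
      injection h2 with h3 _
      exact ⟨(mkb_inj (le_refl 1) (le_refl 1) h3).1, rfl⟩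
    | cons g' gs'' => simp at hlen
  | cons g gs ih =>
    intro gs' b b' hlen h
    cases gs' with
    | nil => simp at hlen
    | cons g' gs'' =>
      have hlen' : gs.length = gs''.length := by simpa using hlen
      obtain ⟨c, l, hc, hd⟩ := dec_shape gs b
      obtain ⟨c', l', hc', hd'⟩ := dec_shape gs'' b'
      cases g with
      | none =>
        cases g' with
        | none =>
          rw [dec_none hd, dec_none hd'] at h
          injection h with h1 h2
          obtain ⟨hb, hcc⟩ := mkb_inj (by omega) (by omega) h1
          subst hb
          have hcc' : c = c' := by omega
          subst hcc'
          have : dec b gs = dec b gs'' := by rw [hd, hd', h2]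
          exact ⟨rfl, by rw [(ih gs'' b b hlen' this).2]⟩
        | some b2 =>
          rw [dec_none hd] at h
          show _ ∧ _
          exfalso
          have h1 : mkb b (c + 1) = mkb b' 1 := by
            have := congrArg (fun t => t.headI) h
            simpa [dec] using this
          have := congrArg Int.natAbs h1
          rw [mkb_natAbs, mkb_natAbs] at this
          omega
      | some b1 =>
        cases g' with
        | none =>
          rw [dec_none hd'] at h
          exfalso
          have h1 : mkb b 1 = mkb b' (c' + 1) := by
            have := congrArg (fun t => t.headI) h
            simpa [dec] using this
          have := congrArg Int.natAbs h1
          rw [mkb_natAbs, mkb_natAbs] at this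
          omega
        | some b2 =>
          have h' : mkb b 1 :: dec b1 gs = mkb b' 1 :: dec b2 gs'' := h
          injection h' with h1 h2
          obtain ⟨hb, -⟩ := mkb_inj (le_refl 1) (le_refl 1) h1
          obtain ⟨hb2, hgs⟩ := ih gs'' b1 b2 hlen' h2
          subst hb hb2 hgs
          exact ⟨rfl, rfl⟩

lemma dec_surj : ∀ N : ℕ, ∀ mu : List ℤ, IsSignedComp (N + 1) mu →
    ∃ b gs, gs.length = N ∧ dec b gs = mu := by
  intro N
  induction N using Nat.strong_induction_on with
  | _ N ih =>
    intro mu hmu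
    cases mu with
    | nil =>
      exfalso
      have := hmu.2
      simp at this
    | cons x l =>
      have hx0 : x ≠ 0 := hmu.1 x (by simp)
      have hsum : x.natAbs + (l.map Int.natAbs).sum = N + 1 := by
        have := hmu.2
        simpa using this
      have hb : mkb (decide (0 < x)) x.natAbs = x := by
        by_cases hp : 0 < x
        · simp [mkb, hp]; omega
        · simp [mkb, hp]
          rw [abs_of_nonpos (by omega)]
          exact neg_neg x
      by_cases hx1 : x.natAbs = 1
      · cases l with
        | nil =>
          have hN : N = 0 := by simp at hsum; omega
          subst hN
          refine ⟨decide (0 < x), [], rfl, ?_⟩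
          show [mkb (decide (0 < x)) 1] = [x]
          rw [← hx1, hb]
        | cons y l' =>
          have hy0 : y ≠ 0 := hmu.1 y (by simp)
          have hsum2 : y.natAbs + (l'.map Int.natAbs).sum = N := by
            simp at hsum
            omega
          have hN1 : 1 ≤ N := by
            have : 1 ≤ y.natAbs := by omega
            omega
          obtain ⟨b', gs', hlen, hdec⟩ := ih (N - 1) (by omega) (y :: l')
            ⟨fun z hz => hmu.1 z (List.mem_cons_of_mem x hz), by
              simp only [List.map_cons, List.sum_cons]
              omega⟩
          refine ⟨decide (0 < x), some b' :: gs', by simp [hlen]; omega, ?_⟩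
          show mkb (decide (0 < x)) 1 :: dec b' gs' = x :: y :: l'
          rw [hdec, ← hx1, hb]
      · have hx2 : 2 ≤ x.natAbs := by
          have : 1 ≤ x.natAbs := by omega
          omega
        have hN1 : 1 ≤ N := by omega
        set x' : ℤ := if 0 < x then x - 1 else x + 1 with hx'def
        have hx'abs : x'.natAbs = x.natAbs - 1 := by
          by_cases hp : 0 < x <;> simp [hx'def, hp] <;> omega
        have hsc' : IsSignedComp N (x' :: l) := by
          refine ⟨fun z hz => ?_, ?_⟩
          · rcases List.mem_cons.mp hz with rfl | hz'
            · intro hzz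
              rw [hzz] at hx'abs
              simp at hx'abs
              omega
            · exact hmu.1 z (by simp [hz'])
          · simp only [List.map_cons, List.sum_cons, hx'abs]
            omega
        obtain ⟨b2, gs2, hlen, hdec⟩ := ih (N - 1) (by omega) (x' :: l)
          (by rwa [show N - 1 + 1 = N by omega])
        obtain ⟨c, l'', hc, hshape⟩ := dec_shape gs2 b2
        rw [hshape] at hdec
        injection hdec with h1 h2
        refine ⟨b2, none :: gs2, by simp [hlen]; omega, ?_⟩
        rw [dec_none hshape, h2]
        have hhead : mkb b2 (c + 1) = x := by
          by_cases hp : 0 < x <;> cases b2 <;>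
            simp [mkb, hx'def, hp] at h1 ⊢ <;> omega
        rw [hhead]

lemma card_scomp (n : ℕ) (hn : 1 ≤ n) : Nat.card (SComp n) = 2 * 3 ^ (n - 1) := by
  have hf : ∀ p : Bool × List.Vector (Option Bool) (n - 1),
      IsSignedComp n (dec p.1 p.2.1) := by
    intro p
    have := dec_sc p.2.1 p.1
    rwa [p.2.2, show 1 + (n - 1) = n by omega] at this
  let f : Bool × List.Vector (Option Bool) (n - 1) → SComp n :=
    fun p => ⟨dec p.1 p.2.1, hf p⟩
  have hbij : Function.Bijective f := by
    constructor
    · rintro ⟨b, gs⟩ ⟨b', gs'⟩ hff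
      have h1 : dec b gs.1 = dec b' gs'.1 := congrArg Subtype.val hff
      obtain ⟨hb, hgs⟩ := dec_inj gs.1 gs'.1 b b' (by rw [gs.2, gs'.2]) h1
      exact Prod.ext hb (Subtype.ext hgs)
    · rintro ⟨mu, hmu⟩
      obtain ⟨b, gs, hlen, hdec⟩ := dec_surj (n - 1) mu
        (by rwa [show n - 1 + 1 = n by omega])
      exact ⟨(b, ⟨gs, hlen⟩), Subtype.ext hdec⟩
  rw [← Nat.card_congr (Equiv.ofBijective f hbij), Nat.card_eq_fintype_card,
    Fintype.card_prod, Fintype.card_bool, card_vector, Fintype.card_option,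
    Fintype.card_bool]

end Counting

theorem stmt1 (r n : ℕ) (hr : 2 ≤ r) (hn : 1 ≤ n) :
    (∀ J ⊆ PiSet r n, ∃! μ : SComp n, Subgroup.closure J = Gmu r n μ.1) ∧
    Set.ncard {H : Subgroup (Grn r n) | ∃ J ⊆ PiSet r n, H = Subgroup.closure J} =
      2 * 3 ^ (n - 1) := by
  have huniq : ∀ J ⊆ PiSet r n, ∃! μ : SComp n, Subgroup.closure J = Gmu r n μ.1 := by
    intro J hJ
    refine ⟨⟨compOf r n J, compOf_signedComp hn J⟩, closure_eq_gmu hr hn hJ, ?_⟩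
    rintro ⟨nu, hnu⟩ hcl
    exact Subtype.ext
      (gmu_inj hr hnu (compOf_signedComp hn J) (hcl.symm.trans (closure_eq_gmu hr hn hJ)))
  refine ⟨huniq, ?_⟩
  have hset : {H : Subgroup (Grn r n) | ∃ J ⊆ PiSet r n, H = Subgroup.closure J} =
      Set.range (fun mu : SComp n => Gmu r n mu.1) := by
    ext H
    constructor
    · rintro ⟨J, hJ, rfl⟩
      obtain ⟨mu, hmu, -⟩ := huniq J hJ
      exact ⟨mu, hmu.symm⟩
    · rintro ⟨mu, rfl⟩
      exact ⟨PiMu r n mu.1, piMu_subset_piSet mu.1, rfl⟩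
  rw [hset]
  have hinj : Function.Injective (fun mu : SComp n => Gmu r n mu.1) := by
    rintro ⟨mu, hmu⟩ ⟨nu, hnu⟩ h
    exact Subtype.ext (gmu_inj hr hmu hnu h)
  rw [← Nat.card_coe_set_eq, Nat.card_range_of_injective hinj, card_scomp n hn]

end CycSol
end
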